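/- arXiv:2605.29660 — 3 statements merged into one kernel-verified Lean document; each statement's English description precedes it below -/
import Mathlib

section
/- Fix λ ≥ 0 and a natural number i ≥ 1. Then λ·g(j,λ,{i}) ≤ 0 for all natural numbers j with 1 ≤ j ≤ i; the map j ↦ λ·g(j,λ,{i}) is decreasing on {1,…,i}, i.e. λ·g(j,λ,{i}) ≤ λ·g(j−1,λ,{i}) for all 2 ≤ j ≤ i; and λ·g(i,λ,{i}) = −(λ/i)·Po({0,…,i−1};λ). -/
open scoped BigOperators

/-- Poisson pmf: Po(k;lam) = lam^k * e^(-lam) / k!  (with the convention 0^0 = 1). -/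
noncomputable def Po (k : ℕ) (lam : ℝ) : ℝ := lam ^ k * Real.exp (-lam) / (Nat.factorial k)

/-- Poisson measure of a set A of naturals: Po(A;lam) = sum over k in A of Po(k;lam). -/
noncomputable def PoSet (A : Set ℕ) (lam : ℝ) : ℝ := ∑' k : A, Po k lam

/-- The scalar Stein-Chen solution g(j,lam,A), defined recursively by g(0,lam,A) = 0 and
g(j,lam,A) = lam⁻¹ * ((j-1)*g(j-1,lam,A) + 1_A(j-1) - Po(A;lam))
             + (1/j) * 1_{lam=0} * (1_A(0) - 1_A(j)) for j ≥ 1,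
with the convention 0⁻¹ = 0. -/
noncomputable def steinChen : ℕ → ℝ → Set ℕ → ℝ
  | 0, _, _ => 0
  | (j + 1), lam, A =>
      lam⁻¹ * ((j : ℝ) * steinChen j lam A
          + A.indicator (fun _ => (1 : ℝ)) j - PoSet A lam)
        + (1 / ((j : ℝ) + 1)) * (if lam = 0 then (1 : ℝ) else 0)
          * (A.indicator (fun _ => (1 : ℝ)) 0 - A.indicator (fun _ => (1 : ℝ)) (j + 1))



lemma poSet_singleton (i : ℕ) (lam : ℝ) : PoSet {i} lam = Po i lam := by
  simpa [PoSet] using tsum_singleton i (fun k => Po k lam)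

lemma poSet_Iic (i : ℕ) (hi : 1 ≤ i) (lam : ℝ) :
    PoSet (Set.Iic (i - 1)) lam = ∑ k ∈ Finset.range i, Po k lam := by
  have h : (Set.Iic (i - 1) : Set ℕ) = ↑(Finset.range i) := by
    ext k
    simp [Nat.lt_iff_le_pred hi]
  rw [PoSet, h]
  exact Finset.tsum_subtype' (Finset.range i) (fun k => Po k lam)

lemma key (lam : ℝ) (i : ℕ) (hi : 1 ≤ i) :
    ∀ j : ℕ, 1 ≤ j → j ≤ i →
      lam * steinChen j lam {i} =
        -(Real.exp (-lam) / (Nat.factorial i)) * (Nat.factorial (j - 1)) *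
          lam ^ (i - j + 1) * ∑ k ∈ Finset.range j, lam ^ k / (Nat.factorial k) := by
  intro j
  induction j with
  | zero => intro h; omega
  | succ j ih =>
    intro _ hji
    by_cases hlam0 : lam = 0
    · subst hlam0
      have : (0:ℝ) ^ (i - (j+1) + 1) = 0 := by
        apply zero_pow; omega
      simp [this]
    · have hindj : ({i} : Set ℕ).indicator (fun _ => (1 : ℝ)) j = 0 := by
        apply Set.indicator_of_notMem; simp; omega
      rcases Nat.eq_zero_or_pos j with hj0 | hj1
      · subst hj0
        simp only [steinChen, hindj, poSet_singleton, hlam0, if_false, Po]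
        have hii : i - 1 + 1 = i := by omega
        rw [hii]
        field_simp
        simp
      · have IH := ih hj1 (by omega)
        simp only [steinChen, hindj, poSet_singleton, hlam0, if_false, Po]
        have hgj : steinChen j lam {i} = lam⁻¹ *
            (-(Real.exp (-lam) / (Nat.factorial i)) * (Nat.factorial (j - 1)) *
              lam ^ (i - j + 1) * ∑ k ∈ Finset.range j, lam ^ k / (Nat.factorial k)) := by
          rw [← IH]; field_simp
        rw [hgj, Finset.sum_range_succ]
        have h1 : i - j + 1 = (i - (j+1) + 1) + 1 := by omega
        have h2 : i = (i - (j+1) + 1) + j := by omega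
        have h3 : (Nat.factorial j : ℝ) = j * (Nat.factorial (j-1)) := by
          rw [show j = (j-1)+1 by omega, Nat.factorial_succ]
          push_cast
          simp
        rw [h1, show Nat.succ j - 1 = j from rfl]
        rw [pow_succ, show lam ^ i = lam ^ ((i - (j+1) + 1) + j) by rw [← h2], pow_add]
        have hfj : (Nat.factorial j : ℝ) ≠ 0 := by positivity
        have hfi : (Nat.factorial i : ℝ) ≠ 0 := by positivity
        rw [h3]
        field_simp
        ring

lemma mono_aux (lam : ℝ) (hlam : 0 ≤ lam) (m : ℕ) (hm : 1 ≤ m) :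
    lam * ∑ k ∈ Finset.range m, lam ^ k / (Nat.factorial k) ≤
      (m : ℝ) * ∑ k ∈ Finset.range (m + 1), lam ^ k / (Nat.factorial k) := by
  have hterm : ∀ k ∈ Finset.range m,
      lam * (lam ^ k / (Nat.factorial k)) ≤ (m : ℝ) * (lam ^ (k+1) / (Nat.factorial (k+1))) := by
    intro k hk
    have hk' : k + 1 ≤ m := Finset.mem_range.mp hk
    have hf : (0:ℝ) < (Nat.factorial k : ℝ) := by positivity
    have h1 : ((k:ℝ) + 1) * (Nat.factorial k) ≤ (m : ℝ) * (Nat.factorial k) := by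
      apply mul_le_mul_of_nonneg_right _ hf.le
      exact_mod_cast hk'
    have hp : (0:ℝ) ≤ lam ^ (k+1) := pow_nonneg hlam _
    rw [Nat.factorial_succ]
    push_cast
    have e1 : lam * (lam ^ k / (Nat.factorial k : ℝ)) = lam ^ (k+1) / (Nat.factorial k : ℝ) := by
      rw [pow_succ]; ring
    have h2 : (0:ℝ) < ((k:ℝ)+1) * (Nat.factorial k : ℝ) := by positivity
    rw [e1, mul_div_assoc', div_le_div_iff₀ hf h2]
    nlinarith [mul_le_mul_of_nonneg_left h1 hp]
  have hsum := Finset.sum_le_sum hterm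
  rw [← Finset.mul_sum, ← Finset.mul_sum] at hsum
  have hrw : ∑ k ∈ Finset.range (m+1), lam ^ k / (Nat.factorial k) =
      (∑ k ∈ Finset.range m, lam ^ (k+1) / (Nat.factorial (k+1))) + 1 := by
    rw [Finset.sum_range_succ' (fun k => lam ^ k / (Nat.factorial k)) m]
    simp
  rw [hrw, mul_add, mul_one]
  have : (0:ℝ) ≤ (m:ℝ) := by positivity
  linarith

/-- For lam ≥ 0 and i ≥ 1: lam * g(j,lam,{i}) ≤ 0 for 1 ≤ j ≤ i, the map
j ↦ lam * g(j,lam,{i}) is decreasing on {1,...,i}, and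
lam * g(i,lam,{i}) = -(lam/i) * Po({0,...,i-1};lam). -/
theorem steinChen_singleton_le (lam : ℝ) (hlam : 0 ≤ lam) (i : ℕ) (hi : 1 ≤ i) :
    (∀ j : ℕ, 1 ≤ j → j ≤ i → lam * steinChen j lam {i} ≤ 0) ∧
    (∀ j : ℕ, 2 ≤ j → j ≤ i →
      lam * steinChen j lam {i} ≤ lam * steinChen (j - 1) lam {i}) ∧
    lam * steinChen i lam {i} = -(lam / (i : ℝ)) * PoSet (Set.Iic (i - 1)) lam := by
  have key' := key lam i hi
  have hSnn : ∀ n : ℕ, (0:ℝ) ≤ ∑ k ∈ Finset.range n, lam ^ k / (Nat.factorial k) := by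
    intro n
    apply Finset.sum_nonneg
    intro k _
    exact div_nonneg (pow_nonneg hlam _) (by positivity)
  refine ⟨?_, ?_, ?_⟩
  · intro j hj1 hji
    rw [key' j hj1 hji]
    have h1 : (0:ℝ) ≤ Real.exp (-lam) / (Nat.factorial i) * (Nat.factorial (j-1)) *
        lam ^ (i - j + 1) * ∑ k ∈ Finset.range j, lam ^ k / (Nat.factorial k) := by
      apply mul_nonneg (mul_nonneg (mul_nonneg (by positivity) (by positivity))
        (pow_nonneg hlam _)) (hSnn j)
    linarith
  · intro j hj2 hji
    obtain ⟨m, rfl⟩ : ∃ m, j = m + 1 := ⟨j - 1, by omega⟩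
    have hm : 1 ≤ m := by omega
    rw [key' (m+1) (by omega) hji, show m + 1 - 1 = m from rfl,
      key' m hm (by omega)]
    have hpow : lam ^ (i - m + 1) = lam * lam ^ (i - (m+1) + 1) := by
      rw [show i - m + 1 = (i - (m+1) + 1) + 1 by omega, pow_succ]; ring
    have hfm : ((m).factorial : ℝ) = m * ((m-1).factorial : ℝ) := by
      rw [show m = (m-1)+1 by omega, Nat.factorial_succ]
      push_cast
      simp
    have aux := mono_aux lam hlam m hm
    have hc : (0:ℝ) ≤ Real.exp (-lam) / (Nat.factorial i) * ((m-1).factorial : ℝ) *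
        lam ^ (i - (m+1) + 1) :=
      mul_nonneg (mul_nonneg (by positivity) (by positivity)) (pow_nonneg hlam _)
    have hmul := mul_le_mul_of_nonneg_left aux hc
    rw [hpow, hfm]
    nlinarith [hmul]
  · rw [key' i hi le_rfl, poSet_Iic i hi lam, show i - i + 1 = 1 by omega, pow_one]
    have hfi : ((i).factorial : ℝ) = i * ((i-1).factorial : ℝ) := by
      rw [show i = (i-1)+1 by omega, Nat.factorial_succ]
      push_cast
      simp
    rw [Finset.mul_sum, Finset.mul_sum]
    apply Finset.sum_congr rfl
    intro k _
    unfold Po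
    have h1 : ((i:ℝ)) ≠ 0 := by positivity
    have h2 : ((Nat.factorial k : ℝ)) ≠ 0 := by positivity
    have h3 : (((i-1).factorial : ℝ)) ≠ 0 := by positivity
    rw [hfi]
    field_simp
end

section
/- For every λ ≥ 0 and all natural numbers i < j: λ·g(j,λ,{i}) = Po(i;λ) · Σ_{s=1}^{∞} ((j−1)!/(j+s−1)!)·λ^s, the series on the right converging absolutely. -/
open scoped BigOperators

/-- The series F(lam, j) = Σ_{t≥0} ((j-1)!/(j+t)!) lam^(t+1). -/
noncomputable def Fser (lam : ℝ) (j : ℕ) : ℝ :=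
  ∑' t : ℕ, (((j - 1).factorial : ℝ) / ((j + t).factorial : ℝ)) * lam ^ (t + 1)

/-- Cleaned-up recursion for lam ≠ 0. -/
lemma steinChen_rec (lam : ℝ) (hlam : lam ≠ 0) (j i : ℕ) :
    lam * steinChen (j + 1) lam {i} =
      (j : ℝ) * steinChen j lam {i} + (if j = i then (1 : ℝ) else 0) - Po i lam := by
  have hind : ∀ k : ℕ, ({i} : Set ℕ).indicator (fun _ => (1 : ℝ)) k
      = if k = i then (1 : ℝ) else 0 := by
    intro k; simp [Set.indicator_apply]
  rw [steinChen, if_neg hlam, poSet_singleton, hind]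
  field_simp
  ring

/-- Generic summability of the series. -/
lemma summable_gen (lam : ℝ) (c j : ℕ) :
    Summable (fun t : ℕ => ((c : ℝ) / ((j + t).factorial : ℝ)) * lam ^ (t + 1)) := by
  apply Summable.of_norm
  have hsum : Summable (fun t : ℕ => (c : ℝ) * |lam| * (|lam| ^ t / (t.factorial : ℝ))) :=
    (Real.summable_pow_div_factorial |lam|).mul_left _
  refine Summable.of_nonneg_of_le (fun t => norm_nonneg _) (fun t => ?_) hsum
  have h1 : (t.factorial : ℝ) ≤ ((j + t).factorial : ℝ) := by
    exact_mod_cast Nat.factorial_le (Nat.le_add_left t j)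
  have h2 : (0 : ℝ) < (t.factorial : ℝ) := by exact_mod_cast t.factorial_pos
  rw [Real.norm_eq_abs, abs_mul, abs_div, abs_pow, Nat.abs_cast, Nat.abs_cast]
  calc (c : ℝ) / ((j + t).factorial : ℝ) * |lam| ^ (t + 1)
      ≤ (c : ℝ) / (t.factorial : ℝ) * |lam| ^ (t + 1) := by
        gcongr
    _ = (c : ℝ) * |lam| * (|lam| ^ t / (t.factorial : ℝ)) := by
        rw [pow_succ]; ring

lemma summable_F (lam : ℝ) (j : ℕ) :
    Summable (fun t : ℕ => (((j - 1).factorial : ℝ) / ((j + t).factorial : ℝ)) * lam ^ (t + 1)) :=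
  summable_gen lam (j - 1).factorial j

/-- Key finite-sum step: j * Σ_{k<j} ((j-1)!/k!) λ^k + λ^j = Σ_{k<j+1} (j!/k!) λ^k. -/
lemma sum_step (lam : ℝ) (j : ℕ) :
    (j : ℝ) * (∑ k ∈ Finset.range j, (((j - 1).factorial : ℝ) / (k.factorial : ℝ)) * lam ^ k)
      + lam ^ j
    = ∑ k ∈ Finset.range (j + 1), ((j.factorial : ℝ) / (k.factorial : ℝ)) * lam ^ k := by
  rcases Nat.eq_zero_or_pos j with h | h
  · simp [h]
  · rw [Finset.sum_range_succ, Finset.mul_sum]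
    have hlast : ((j.factorial : ℝ) / (j.factorial : ℝ)) * lam ^ j = lam ^ j := by
      rw [div_self (by exact_mod_cast j.factorial_ne_zero), one_mul]
    rw [hlast]
    congr 1
    refine Finset.sum_congr rfl fun k _ => ?_
    have hfac : (j : ℝ) * ((j - 1).factorial : ℝ) = (j.factorial : ℝ) := by
      exact_mod_cast Nat.mul_factorial_pred (by omega)
    rw [← mul_assoc, ← mul_div_assoc, hfac]

/-- Closed form below i (for j ≤ i). -/
lemma steinChen_below (lam : ℝ) (hlam : lam ≠ 0) (i : ℕ) :
    ∀ j, j ≤ i → lam ^ j * steinChen j lam {i}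
      = -(Po i lam) *
        ∑ k ∈ Finset.range j, (((j - 1).factorial : ℝ) / (k.factorial : ℝ)) * lam ^ k := by
  intro j
  induction j with
  | zero => intro _; simp [steinChen]
  | succ j ih =>
    intro hji
    have hj : j ≤ i := Nat.le_of_succ_le hji
    have hne : j ≠ i := Nat.ne_of_lt (Nat.lt_of_succ_le hji)
    have hrec := steinChen_rec lam hlam j i
    rw [if_neg hne, add_zero] at hrec
    have hpow : lam ^ (j + 1) * steinChen (j + 1) lam {i}
        = lam ^ j * (lam * steinChen (j + 1) lam {i}) := by ring
    have hexpand : lam ^ j * ((j : ℝ) * steinChen j lam {i} - Po i lam)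
        = (j : ℝ) * (lam ^ j * steinChen j lam {i}) - Po i lam * lam ^ j := by ring
    rw [hpow, hrec, hexpand, ih hj, Nat.add_sub_cancel, ← sum_step lam j]
    ring

lemma exp_tail (lam : ℝ) (n : ℕ) :
    Real.exp lam - ∑ k ∈ Finset.range n, lam ^ k / (k.factorial : ℝ)
      = ∑' t : ℕ, lam ^ (t + n) / ((t + n).factorial : ℝ) := by
  have hs : Summable (fun k : ℕ => lam ^ k / (k.factorial : ℝ)) :=
    Real.summable_pow_div_factorial lam
  have h := Summable.sum_add_tsum_nat_add (f := fun k : ℕ => lam ^ k / (k.factorial : ℝ)) n hs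
  have hexp : Real.exp lam = ∑' k : ℕ, lam ^ k / (k.factorial : ℝ) := by
    rw [Real.exp_eq_exp_ℝ, NormedSpace.exp_eq_tsum_div]
  rw [hexp, ← h]; ring

/-- Recursion for the series: j * F(j) = lam + lam * F(j+1), for j ≥ 1. -/
lemma Fser_rec (lam : ℝ) (j : ℕ) (hj : 1 ≤ j) :
    (j : ℝ) * Fser lam j = lam + lam * Fser lam (j + 1) := by
  unfold Fser
  rw [← tsum_mul_left, ← tsum_mul_left]
  have hfac : (j : ℝ) * ((j - 1).factorial : ℝ) = (j.factorial : ℝ) := by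
    exact_mod_cast Nat.mul_factorial_pred (by omega)
  have h1 : (fun t : ℕ => (j : ℝ) * ((((j - 1).factorial : ℝ) / ((j + t).factorial : ℝ))
        * lam ^ (t + 1)))
      = fun t : ℕ => ((j.factorial : ℝ) / ((j + t).factorial : ℝ)) * lam ^ (t + 1) := by
    funext t
    rw [← mul_assoc, ← mul_div_assoc, hfac]
  rw [h1, Summable.tsum_eq_zero_add (summable_gen lam j.factorial j)]
  have h2 : ((j.factorial : ℝ) / ((j + 0).factorial : ℝ)) * lam ^ (0 + 1) = lam := by
    rw [Nat.add_zero, div_self (by exact_mod_cast j.factorial_ne_zero)]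
    ring
  rw [h2]
  congr 1
  refine tsum_congr fun t => ?_
  have he : j + (t + 1) = j + 1 + t := by omega
  rw [he, Nat.add_sub_cancel]
  ring

/-- Base case: j = i + 1. -/
lemma steinChen_base (lam : ℝ) (hlam : 0 < lam) (i : ℕ) :
    lam * steinChen (i + 1) lam {i} = Po i lam * Fser lam (i + 1) := by
  have hne : lam ≠ 0 := ne_of_gt hlam
  have hpow : lam ^ i ≠ 0 := pow_ne_zero i hne
  apply mul_left_cancel₀ hpow
  have hrec := steinChen_rec lam hne i i
  rw [if_pos rfl] at hrec
  have hbelow := steinChen_below lam hne i i le_rfl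
  have hi0 : (i.factorial : ℝ) ≠ 0 := by exact_mod_cast i.factorial_ne_zero
  have hPo : Po i lam = lam ^ i * Real.exp (-lam) / (i.factorial : ℝ) := rfl
  -- LHS computation
  have lhs_eq : lam ^ i * (lam * steinChen (i + 1) lam {i})
      = lam ^ i - Po i lam *
        ∑ k ∈ Finset.range (i + 1), ((i.factorial : ℝ) / (k.factorial : ℝ)) * lam ^ k := by
    rw [hrec]
    have hexpand : lam ^ i * ((i : ℝ) * steinChen i lam {i} + 1 - Po i lam)
        = (i : ℝ) * (lam ^ i * steinChen i lam {i}) + lam ^ i - Po i lam * lam ^ i := by ring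
    rw [hexpand, hbelow, ← sum_step lam i]
    ring
  have hsum_eq : Po i lam *
      ∑ k ∈ Finset.range (i + 1), ((i.factorial : ℝ) / (k.factorial : ℝ)) * lam ^ k
      = lam ^ i * Real.exp (-lam) *
        ∑ k ∈ Finset.range (i + 1), lam ^ k / (k.factorial : ℝ) := by
    rw [hPo, Finset.mul_sum, Finset.mul_sum]
    refine Finset.sum_congr rfl fun k _ => ?_
    have hk0 : (k.factorial : ℝ) ≠ 0 := by exact_mod_cast k.factorial_ne_zero
    field_simp
  have htail := exp_tail lam (i + 1)
  -- RHS computation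
  have rhs_eq : lam ^ i * (Po i lam * Fser lam (i + 1))
      = lam ^ i * Real.exp (-lam) *
        ∑' t : ℕ, lam ^ (t + (i + 1)) / ((t + (i + 1)).factorial : ℝ) := by
    rw [hPo]
    unfold Fser
    rw [Nat.add_sub_cancel, ← tsum_mul_left, ← tsum_mul_left, ← tsum_mul_left]
    refine tsum_congr fun t => ?_
    have he : i + 1 + t = t + (i + 1) := by omega
    rw [he]
    have ht0 : (((t + (i + 1)).factorial : ℕ) : ℝ) ≠ 0 := by
      exact_mod_cast (t + (i + 1)).factorial_ne_zero
    field_simp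
    ring
  calc lam ^ i * (lam * steinChen (i + 1) lam {i})
      = lam ^ i - Po i lam *
        ∑ k ∈ Finset.range (i + 1), ((i.factorial : ℝ) / (k.factorial : ℝ)) * lam ^ k := lhs_eq
    _ = lam ^ i * Real.exp (-lam) *
        (Real.exp lam - ∑ k ∈ Finset.range (i + 1), lam ^ k / (k.factorial : ℝ)) := by
        rw [hsum_eq, mul_sub]
        congr 1
        rw [mul_assoc, ← Real.exp_add, neg_add_cancel, Real.exp_zero, mul_one]
    _ = lam ^ i * Real.exp (-lam) *
        ∑' t : ℕ, lam ^ (t + (i + 1)) / ((t + (i + 1)).factorial : ℝ) := by rw [htail]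
    _ = lam ^ i * (Po i lam * Fser lam (i + 1)) := rhs_eq.symm

/-- The main identity for lam > 0. -/
lemma steinChen_main (lam : ℝ) (hlam : 0 < lam) (i d : ℕ) :
    lam * steinChen (i + 1 + d) lam {i} = Po i lam * Fser lam (i + 1 + d) := by
  induction d with
  | zero => exact steinChen_base lam hlam i
  | succ d ih =>
    have hm : i + 1 + (d + 1) = (i + 1 + d) + 1 := by omega
    rw [hm]
    set m := i + 1 + d with hmdef
    have hrec := steinChen_rec lam hlam.ne' m i
    have hne : m ≠ i := by omega
    rw [if_neg hne, add_zero] at hrec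
    apply mul_left_cancel₀ hlam.ne'
    calc lam * (lam * steinChen (m + 1) lam {i})
        = lam * ((m : ℝ) * steinChen m lam {i} - Po i lam) := by rw [hrec]
      _ = (m : ℝ) * (lam * steinChen m lam {i}) - lam * Po i lam := by ring
      _ = (m : ℝ) * (Po i lam * Fser lam m) - lam * Po i lam := by rw [ih]
      _ = Po i lam * ((m : ℝ) * Fser lam m - lam) := by ring
      _ = Po i lam * (lam * Fser lam (m + 1)) := by
          rw [Fser_rec lam m (by omega)]; ring
      _ = lam * (Po i lam * Fser lam (m + 1)) := by ring

/-- For lam ≥ 0 and i < j: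
lam * g(j,lam,{i}) = Po(i;lam) * sum_{s=1}^infty ((j-1)!/(j+s-1)!) * lam^s,
the series converging absolutely (indexed here by s = t+1, t ∈ ℕ, so that
(j+s-1)! = (j+t)!). -/
theorem steinChen_singleton_series (lam : ℝ) (hlam : 0 ≤ lam) (i j : ℕ) (hij : i < j) :
    Summable (fun t : ℕ =>
      |(((j - 1).factorial : ℝ) / ((j + t).factorial : ℝ)) * lam ^ (t + 1)|) ∧
    lam * steinChen j lam {i} =
      Po i lam *
        ∑' t : ℕ, (((j - 1).factorial : ℝ) / ((j + t).factorial : ℝ)) * lam ^ (t + 1) := by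
  constructor
  · exact summable_abs_iff.2 (summable_F lam j)
  · rcases eq_or_lt_of_le hlam with h0 | hpos
    · rw [← h0]
      simp [zero_pow]
    · obtain ⟨d, rfl⟩ : ∃ d, j = i + 1 + d := ⟨j - (i + 1), by omega⟩
      exact steinChen_main lam hpos i d
end

section
/- Let W : Ω → ℕ be measurable with W ≤ n everywhere for some n ∈ ℕ, let H be a nonnegative version of E[W|𝓖], and let A ⊆ ℕ. Then, almost everywhere, E[ H·g(W+1, H, A) − W·g(W, H, A) | 𝓖 ] = ℙ[{W ∈ A}|𝓖] − Po(A;H), where g is evaluated pointwise, i.e. ω ↦ g(W(ω)+1, H(ω), A) and ω ↦ g(W(ω), H(ω), A). -/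
open scoped BigOperators

open MeasureTheory

lemma summable_Po (x : ℝ) : Summable (fun k => Po k x) := by
  have := (Real.summable_pow_div_factorial x).mul_right (Real.exp (-x))
  refine this.congr fun k => ?_
  simp [Po]; ring

lemma PoSet_eq (A : Set ℕ) (x : ℝ) :
    PoSet A x = ∑' k : ℕ, A.indicator (fun k => Po k x) k := by
  unfold PoSet; exact tsum_subtype A (fun k => Po k x)

lemma PoSet_zero (A : Set ℕ) : PoSet A 0 = A.indicator (fun _ => (1:ℝ)) 0 := by
  rw [PoSet_eq]
  rw [tsum_eq_single 0]
  · by_cases h : (0:ℕ) ∈ A <;> simp [Set.indicator, h, Po]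
  · intro k hk
    by_cases h : k ∈ A <;> simp [Set.indicator, h, Po, zero_pow hk]

lemma tsum_Po (x : ℝ) : ∑' k : ℕ, Po k x = 1 := by
  have h1 : ∑' k : ℕ, (x ^ k / (Nat.factorial k) : ℝ) = Real.exp x := by
    rw [Real.exp_eq_exp_ℝ, NormedSpace.exp_eq_tsum_div]
  have : ∑' k : ℕ, Po k x = (∑' k : ℕ, (x ^ k / (Nat.factorial k) : ℝ)) * Real.exp (-x) := by
    rw [← tsum_mul_right]
    refine tsum_congr fun k => ?_
    simp [Po]; ring
  rw [this, h1, ← Real.exp_add]; simp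

lemma Po_nonneg {x : ℝ} (hx : 0 ≤ x) (k : ℕ) : 0 ≤ Po k x := by
  unfold Po
  have := (Real.exp_pos (-x)).le
  positivity

lemma PoSet_nonneg (A : Set ℕ) {x : ℝ} (hx : 0 ≤ x) : 0 ≤ PoSet A x := by
  rw [PoSet_eq]
  exact tsum_nonneg fun k => Set.indicator_nonneg (fun k _ => Po_nonneg hx k) k

lemma PoSet_le_one (A : Set ℕ) {x : ℝ} (hx : 0 ≤ x) : PoSet A x ≤ 1 := by
  rw [PoSet_eq, ← tsum_Po x]
  refine Summable.tsum_le_tsum (fun k => ?_) ((summable_Po x).indicator A) (summable_Po x)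
  exact Set.indicator_le_self' (fun k _ => Po_nonneg hx k) k

lemma measurable_Po (k : ℕ) : Measurable fun x => Po k x := by
  unfold Po
  fun_prop

lemma measurable_PoSet (A : Set ℕ) : Measurable (PoSet A) := by
  have h : ∀ x, Filter.Tendsto (fun N => ∑ k ∈ Finset.range N, A.indicator (fun k => Po k x) k)
      Filter.atTop (nhds (PoSet A x)) := by
    intro x
    rw [PoSet_eq]
    exact ((summable_Po x).indicator A).hasSum.tendsto_sum_nat
  exact measurable_of_tendsto_metrizable
    (fun N => Finset.measurable_sum _ fun k _ => by
      by_cases hk : k ∈ A <;> simp only [Set.indicator, hk, if_true, if_false]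
      · exact measurable_Po k
      · exact measurable_const) (tendsto_pi_nhds.2 h)

lemma steinChen_succ_zero (j : ℕ) (A : Set ℕ) :
    steinChen (j+1) 0 A
      = (1/((j:ℝ)+1)) * (A.indicator (fun _ => (1:ℝ)) 0 - A.indicator (fun _ => (1:ℝ)) (j+1)) := by
  simp [steinChen]

lemma steinChen_key (j : ℕ) (lam : ℝ) (A : Set ℕ) :
    lam * steinChen (j+1) lam A
      = (j:ℝ) * steinChen j lam A + A.indicator (fun _ => (1:ℝ)) j - PoSet A lam := by
  by_cases hl : lam = 0
  · subst hl
    rw [PoSet_zero]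
    cases j with
    | zero => simp [steinChen]
    | succ m =>
      rw [steinChen_succ_zero]
      have hm : ((m:ℝ)+1) ≠ 0 := by positivity
      have h2 : ((m:ℝ)+1) * ((1/((m:ℝ)+1)) * (A.indicator (fun _ => (1:ℝ)) 0
          - A.indicator (fun _ => (1:ℝ)) (m+1))) = A.indicator (fun _ => (1:ℝ)) 0
          - A.indicator (fun _ => (1:ℝ)) (m+1) := by
        field_simp
      rw [steinChen_succ_zero]
      push_cast
      rw [h2]
      ring
  · simp only [steinChen, hl, if_false, mul_zero, zero_mul, add_zero, ← mul_assoc,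
      mul_inv_cancel₀ hl, one_mul]

lemma steinChen_pointwise (lam : ℝ) (j : ℕ) (A : Set ℕ) :
    lam * steinChen (j+1) lam A - (j:ℝ) * steinChen j lam A
      = A.indicator (fun _ => (1:ℝ)) j - PoSet A lam := by
  rw [steinChen_key]; ring


/-- Scalar instance of Lemma 4.8: if W is a bounded ℕ-valued random variable and H is a
nonnegative version of E[W|𝓖], then, almost everywhere,
E[ H*g(W+1,H,A) - W*g(W,H,A) | 𝓖 ] = P[{W ∈ A}|𝓖] - Po(A;H). -/
theorem condexp_steinChen_recurrence
    {Ω : Type*} (𝓖 : MeasurableSpace Ω) [mΩ : MeasurableSpace Ω] (h𝓖 : 𝓖 ≤ mΩ)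
    (μ : Measure Ω) [IsProbabilityMeasure μ]
    (W : Ω → ℕ) (hWmeas : Measurable W) (n : ℕ) (hWle : ∀ ω, W ω ≤ n)
    (H : Ω → ℝ) (hH0 : ∀ ω, 0 ≤ H ω)
    (hH : H =ᵐ[μ] μ[fun ω => (W ω : ℝ) | 𝓖])
    (A : Set ℕ) :
    μ[fun ω => H ω * steinChen (W ω + 1) (H ω) A
        - (W ω : ℝ) * steinChen (W ω) (H ω) A | 𝓖]
      =ᵐ[μ]
    fun ω => (μ[Set.indicator {ω' | W ω' ∈ A} (fun _ => (1 : ℝ)) | 𝓖]) ω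
        - PoSet A (H ω) := by
  have hind : ∀ ω, Set.indicator {ω' | W ω' ∈ A} (fun _ => (1:ℝ)) ω
      = A.indicator (fun _ => (1:ℝ)) (W ω) := by
    intro ω; by_cases h : W ω ∈ A <;> simp [Set.indicator, h]
  have heq : (fun ω => H ω * steinChen (W ω + 1) (H ω) A - (W ω : ℝ) * steinChen (W ω) (H ω) A)
      = fun ω => Set.indicator {ω' | W ω' ∈ A} (fun _ => (1:ℝ)) ω - PoSet A (H ω) := by
    funext ω
    rw [hind ω, ← steinChen_pointwise (H ω) (W ω) A]
  rw [heq]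
  set c := μ[fun ω => (W ω : ℝ) | 𝓖] with hc
  have hsmc : StronglyMeasurable[𝓖] c := stronglyMeasurable_condExp
  have hPc : StronglyMeasurable[𝓖] (fun ω => PoSet A (c ω)) :=
    ((measurable_PoSet A).comp hsmc.measurable).stronglyMeasurable
  have hHc : (fun ω => PoSet A (H ω)) =ᵐ[μ] (fun ω => PoSet A (c ω)) :=
    hH.mono fun ω h => by dsimp only; rw [h]
  have hindInt : Integrable (Set.indicator {ω' | W ω' ∈ A} (fun _ => (1:ℝ))) μ := by
    refine (integrable_const (1:ℝ)).indicator ?_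
    exact hWmeas (A.to_countable.measurableSet)
  have hbound : ∀ ω, ‖PoSet A (H ω)‖ ≤ 1 := by
    intro ω
    rw [Real.norm_eq_abs, abs_le]
    constructor
    · linarith [PoSet_nonneg A (hH0 ω)]
    · exact PoSet_le_one A (hH0 ω)
  have hPHmeas : AEStronglyMeasurable (fun ω => PoSet A (H ω)) μ :=
    ((hPc.mono h𝓖).aestronglyMeasurable).congr hHc.symm
  have hPHint : Integrable (fun ω => PoSet A (H ω)) μ :=
    ⟨hPHmeas, HasFiniteIntegral.of_bounded (C := 1) (Filter.Eventually.of_forall hbound)⟩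
  have hPcint : Integrable (fun ω => PoSet A (c ω)) μ := hPHint.congr hHc
  have hsub := condExp_sub (m := 𝓖) hindInt hPHint
  have hstep : μ[fun ω => PoSet A (H ω) | 𝓖] =ᵐ[μ] fun ω => PoSet A (H ω) := by
    refine (condExp_congr_ae hHc).trans ?_
    rw [condExp_of_stronglyMeasurable h𝓖 hPc hPcint]
    exact hHc.symm
  have hfun : (fun ω => Set.indicator {ω' | W ω' ∈ A} (fun _ => (1:ℝ)) ω - PoSet A (H ω))
      = (Set.indicator {ω' | W ω' ∈ A} (fun _ => (1:ℝ))) - (fun ω => PoSet A (H ω)) := rfl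
  rw [hfun]
  refine hsub.trans ?_
  filter_upwards [hstep] with ω hω
  simp only [Pi.sub_apply, hω]
end
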